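/- Consider the discrete update x_{k+1} = x_k + f(x_k, u_k)·dt, and suppose at every step the constraint φ(x_{k+1}) ≤ max{0, φ(x_k) - γ·dt} holds with γ, dt > 0. Then: (i) if φ(x_0) ≤ 0, then φ(x_k) ≤ 0 for all k (forward invariance); (ii) if φ(x_0) > 0, then φ(x_k) ≤ 0 for all k ≥ ⌈φ(x_0)/(γ·dt)⌉ (finite-step convergence). -/
import Mathlib

theorem stmt_17 {n : ℕ} {U : Type*}
    (f : EuclideanSpace ℝ (Fin n) → U → EuclideanSpace ℝ (Fin n))
    (φ : EuclideanSpace ℝ (Fin n) → ℝ)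
    (x : ℕ → EuclideanSpace ℝ (Fin n)) (u : ℕ → U)
    (γ dt : ℝ) (hγ : 0 < γ) (hdt : 0 < dt)
    (hstep : ∀ k, x (k + 1) = x k + dt • f (x k) (u k))
    (hsafe : ∀ k, φ (x (k + 1)) ≤ max 0 (φ (x k) - γ * dt)) :
    (φ (x 0) ≤ 0 → ∀ k, φ (x k) ≤ 0) ∧
    (0 < φ (x 0) → ∀ k : ℕ, ⌈φ (x 0) / (γ * dt)⌉ ≤ (k : ℤ) → φ (x k) ≤ 0) := by
  have hgd : 0 < γ * dt := mul_pos hγ hdt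
  have key : ∀ k : ℕ, φ (x k) ≤ max 0 (φ (x 0) - k * (γ * dt)) := by
    intro k
    induction k with
    | zero => simp [le_max_right]
    | succ k ih =>
      have h1 := hsafe k
      have h2 : φ (x k) - γ * dt ≤ max 0 (φ (x 0) - (k + 1) * (γ * dt)) := by
        rcases le_max_iff.mp ih with h | h
        · exact le_max_of_le_left (by linarith)
        · exact le_max_of_le_right (by push_cast; linarith)
      calc φ (x (k + 1)) ≤ max 0 (φ (x k) - γ * dt) := h1
        _ ≤ max 0 (max 0 (φ (x 0) - (k + 1) * (γ * dt))) := by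
            exact max_le_max le_rfl h2
        _ = max 0 (φ (x 0) - (↑(k + 1)) * (γ * dt)) := by rw [← max_assoc, max_self]; push_cast; ring_nf
  constructor
  · intro h0 k
    induction k with
    | zero => exact h0
    | succ k ih =>
      have := hsafe k
      have : φ (x (k + 1)) ≤ max 0 (φ (x k) - γ * dt) := this
      have h2 : max 0 (φ (x k) - γ * dt) = 0 := max_eq_left (by linarith)
      linarith [this, h2 ▸ this]
  · intro h0 k hk
    have hdiv : φ (x 0) / (γ * dt) ≤ (k : ℝ) := by
      have := Int.ceil_le.mp hk
      exact_mod_cast this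
    have hle : φ (x 0) ≤ k * (γ * dt) := by
      rw [div_le_iff₀ hgd] at hdiv; linarith
    have := key k
    have : max 0 (φ (x 0) - k * (γ * dt)) = 0 := max_eq_left (by linarith)
    linarith [key k, this ▸ key k]
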